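/- In Setup B, let J ∈ Λ with n+1 ∈ J, let c = (c_i)_{i∈J} be a family of integers, and fix a choice of i₀ ∈ I'∖J defining F(J,c). Then there exists a real number s with c_{n+1} ≤ s < c_{n+1} + 1 such that D(J,c;s) ⊆ F(J,c). -/

import Mathlib

open scoped RealInnerProductSpace BigOperators

noncomputable section

/-- Euclidean space `ℝⁿ` with the standard inner product. -/
abbrev E (n : ℕ) : Type := EuclideanSpace ℝ (Fin n)

/-- The index set `I' = {1,…,n'}` inside `Ī = {1,…,n+1}` (index `Fin.last n`
plays the role of `n+1`). -/
def Iprime (n n' : ℕ) : Finset (Fin (n + 1)) := Finset.univ.filter fun i => i.val < n'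

/-- `C(J,c) := {x ∈ ℝⁿ : ⟨x, b_i⟩ > c_i for all i ∈ J}`. -/
def CSet (n : ℕ) (b : Fin (n + 1) → E n) (J : Finset (Fin (n + 1)))
    (c : Fin (n + 1) → ℤ) : Set (E n) :=
  {x | ∀ i ∈ J, (c i : ℝ) < ⟪x, b i⟫}

/-- A multi-index `𝔪 = (m_i)_{i ∈ I'∖{i₀}}` is admissible if `m_i ≥ 0` for every
`i ∈ I' ∩ J` (recall `i₀ ∉ J`). -/
def Admissible (n n' : ℕ) (J : Finset (Fin (n + 1))) (m : Fin (n + 1) → ℤ) : Prop :=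
  ∀ i ∈ Iprime n n' ∩ J, 0 ≤ m i

/-- The ceiling bound
`⌈(c_{n+1} − Σ_{i∈I'∩J} α_i(c_i+m_i) − Σ_{i∈I'∩K₁} α_i m_i)/α_{i₀}⌉`,
where `K₁ = Ī∖(J∪{i₀})`, so `I'∩K₁ = (I'∖J)∖{i₀}`. -/
def ceilB (n n' : ℕ) (α : Fin (n + 1) → ℚ) (J : Finset (Fin (n + 1)))
    (i₀ : Fin (n + 1)) (c m : Fin (n + 1) → ℤ) : ℤ :=
  ⌈((c (Fin.last n) : ℚ) - ∑ i ∈ Iprime n n' ∩ J, α i * ((c i : ℚ) + (m i : ℚ))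
      - ∑ i ∈ (Iprime n n' \ J).erase i₀, α i * (m i : ℚ)) / α i₀⌉

/-- `V(J,c,𝔪)` as in Setup B. -/
def VSet (n n' : ℕ) (b : Fin (n + 1) → E n) (α : Fin (n + 1) → ℚ)
    (J : Finset (Fin (n + 1))) (i₀ : Fin (n + 1)) (c m : Fin (n + 1) → ℤ) :
    Set (E n) :=
  {x | (∀ i ∈ Iprime n n' ∩ J, ((c i : ℝ) + (m i : ℝ)) < ⟪x, b i⟫)
    ∧ (∀ i ∈ (Iprime n n' \ J).erase i₀, (m i : ℝ) < ⟪x, b i⟫)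
    ∧ (∀ i ∈ (J \ Iprime n n').erase (Fin.last n), (c i : ℝ) < ⟪x, b i⟫)
    ∧ ((ceilB n n' α J i₀ c m : ℝ) < ⟪x, b i₀⟫)}

/-- `F(J,c) := ⋃_{𝔪 admissible} V(J,c,𝔪)` (for `n+1 ∈ J`, with the choice `i₀`). -/
def FSetB (n n' : ℕ) (b : Fin (n + 1) → E n) (α : Fin (n + 1) → ℚ)
    (J : Finset (Fin (n + 1))) (i₀ : Fin (n + 1)) (c : Fin (n + 1) → ℤ) : Set (E n) :=
  {x | ∃ m : Fin (n + 1) → ℤ, Admissible n n' J m ∧ x ∈ VSet n n' b α J i₀ c m}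

/-- `F(J,c)` in general: the union above when `n+1 ∈ J`, and `C(J,c)` otherwise. -/
def FSetB' (n n' : ℕ) (b : Fin (n + 1) → E n) (α : Fin (n + 1) → ℚ)
    (J : Finset (Fin (n + 1))) (i₀ : Fin (n + 1)) (c : Fin (n + 1) → ℤ) : Set (E n) :=
  if Fin.last n ∈ J then FSetB n n' b α J i₀ c else CSet n b J c

/-- `D(J,c;s) := {x : ⟨x,b_i⟩ > c_i for all i ∈ J∩I, and ⟨x,b_{n+1}⟩ ≥ s}`. -/
def DSet (n : ℕ) (b : Fin (n + 1) → E n) (J : Finset (Fin (n + 1)))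
    (c : Fin (n + 1) → ℤ) (s : ℝ) : Set (E n) :=
  {x | (∀ i ∈ J.erase (Fin.last n), (c i : ℝ) < ⟪x, b i⟫) ∧ s ≤ ⟪x, b (Fin.last n)⟫}

lemma ceil_le_of_den (r : ℚ) (D : ℤ) (hD : 0 < D) (k : ℤ) (h : r * D = k) :
    (⌈r⌉ : ℚ) ≤ r + 1 - 1/D := by
  have h1 : (⌈r⌉ : ℚ) < r + 1 := Int.ceil_lt_add_one r
  have hD' : (0:ℚ) < D := by exact_mod_cast hD
  have h2 : (⌈r⌉ : ℚ) * D < (r + 1) * D := mul_lt_mul_of_pos_right h1 hD'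
  have h3 : (⌈r⌉ * D : ℤ) < k + D := by
    have : ((⌈r⌉ * D : ℤ) : ℚ) < ((k + D : ℤ) : ℚ) := by push_cast; nlinarith [h]
    exact_mod_cast this
  have h4 : (⌈r⌉ * D : ℤ) ≤ k + D - 1 := by omega
  have h5 : ((⌈r⌉:ℚ)) * D ≤ (k:ℚ) + D - 1 := by exact_mod_cast h4
  have hinv : 1/(D:ℚ) * D = 1 := one_div_mul_cancel hD'.ne'
  nlinarith [h5, h, hinv, hD']

/-- Setup B: for `J ∈ Λ` with `n+1 ∈ J`, integers `c = (c_i)_{i∈J}`, and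
a choice `i₀ ∈ I'∖J`, there is a real number `s` with `c_{n+1} ≤ s < c_{n+1} + 1` such
that `D(J,c;s) ⊆ F(J,c)`. -/
theorem stmt3 (n n' : ℕ) (hn'1 : 1 ≤ n') (hn'n : n' ≤ n)
    (b : Fin (n + 1) → E n) (α : Fin (n + 1) → ℚ)
    (hb : LinearIndependent ℝ fun i : Fin n => b i.castSucc)
    (hspan : Submodule.span ℝ (Set.range fun i : Fin n => b i.castSucc) = ⊤)
    (hα : ∀ i : Fin (n + 1), i.val < n' → 0 < α i)
    (hαsum : ∑ i ∈ Iprime n n', α i ≤ 1)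
    (hlast : b (Fin.last n) = ∑ i ∈ Iprime n n', (α i : ℝ) • b i)
    (J : Finset (Fin (n + 1))) (hJne : J ≠ Finset.univ)
    (hJI : ¬ Iprime n n' ⊆ J) (hJlast : Fin.last n ∈ J)
    (i₀ : Fin (n + 1)) (hi₀ : i₀ ∈ Iprime n n' \ J)
    (c : Fin (n + 1) → ℤ) :
    ∃ s : ℝ, (c (Fin.last n) : ℝ) ≤ s ∧ s < (c (Fin.last n) : ℝ) + 1 ∧
      DSet n b J c s ⊆ FSetB n n' b α J i₀ c := by

  classical
  obtain ⟨hi₀I, hi₀J⟩ := Finset.mem_sdiff.mp hi₀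
  have hi₀n' : i₀.val < n' := by simpa [Iprime] using hi₀I
  have hαi₀ : 0 < α i₀ := hα i₀ hi₀n'
  set D : ℤ := ∏ i : Fin (n+1), ((α i).den : ℤ) with hDdef
  have hDpos : 0 < D := Finset.prod_pos (fun i _ => by positivity)
  set p : ℤ := (α i₀).num with hpdef
  have hppos : 0 < p := Rat.num_pos.mpr hαi₀
  set D' : ℤ := p * D with hD'def
  have hD'pos : 0 < D' := mul_pos hppos hDpos
  have hD'1 : 1 ≤ D' := hD'pos
  set Ei : Finset (Fin (n+1)) := (Iprime n n').erase i₀ with hEdef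
  set S : ℚ := ∑ i ∈ Iprime n n', α i with hSdef
  have hαnn : ∀ i ∈ Iprime n n', (0:ℚ) ≤ α i := fun i hi =>
    (hα i (by simpa [Iprime] using hi)).le
  have hαS : α i₀ ≤ S := Finset.single_le_sum hαnn hi₀I
  set ε : ℚ := α i₀ / (2 * (D' : ℚ)) with hεdef
  have h2D' : (0:ℚ) < 2 * (D':ℚ) := by
    have : (0:ℚ) < (D':ℚ) := by exact_mod_cast hD'pos
    linarith
  have hεpos : 0 < ε := div_pos hαi₀ h2D'
  have hεle : ε ≤ α i₀ := by
    rw [hεdef]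
    apply div_le_self hαi₀.le
    have : (1:ℚ) ≤ (D':ℚ) := by exact_mod_cast hD'1
    linarith
  refine ⟨(c (Fin.last n) : ℝ) + (S : ℝ) - (ε : ℝ), ?_, ?_, ?_⟩
  · have : ε ≤ S := hεle.trans hαS
    have : (ε:ℝ) ≤ (S:ℝ) := by exact_mod_cast this
    linarith
  · have h1 : (S:ℝ) ≤ 1 := by exact_mod_cast hαsum
    have h2 : (0:ℝ) < (ε:ℝ) := by exact_mod_cast hεpos
    linarith
  intro x hx
  obtain ⟨hx1, hx2⟩ := hx
  set t : Fin (n+1) → ℤ := fun i => ⌈⟪x, b i⟫⌉ - 1 with htdef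
  have ht_lt : ∀ i, ((t i : ℝ)) < ⟪x, b i⟫ := by
    intro i
    have := Int.ceil_lt_add_one (⟪x, b i⟫)
    push_cast [htdef]; linarith
  have ht_ge : ∀ i, ⟪x, b i⟫ ≤ (t i : ℝ) + 1 := by
    intro i
    have := Int.le_ceil (⟪x, b i⟫)
    push_cast [htdef]; linarith
  set m : Fin (n+1) → ℤ := fun i => if i ∈ J then t i - c i else t i with hmdef
  have hne_last : ∀ i ∈ Iprime n n', i ≠ Fin.last n := by
    intro i hi
    have : i.val < n' := by simpa [Iprime] using hi
    intro h
    rw [h] at this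
    simp only [Fin.val_last] at this
    omega
  have hcy : ∀ i ∈ Iprime n n' ∩ J, (c i : ℝ) < ⟪x, b i⟫ := by
    intro i hi
    obtain ⟨hiI, hiJ⟩ := Finset.mem_inter.mp hi
    exact hx1 i (Finset.mem_erase.mpr ⟨hne_last i hiI, hiJ⟩)
  have hct : ∀ i ∈ Iprime n n' ∩ J, c i ≤ t i := by
    intro i hi
    have := hcy i hi
    have h2 : c i < ⌈⟪x, b i⟫⌉ := Int.lt_ceil.mpr this
    simp only [htdef]; omega
  have hadm : Admissible n n' J m := by
    intro i hi
    obtain ⟨hiI, hiJ⟩ := Finset.mem_inter.mp hi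
    simp only [hmdef, if_pos hiJ]
    have := hct i hi; omega
  -- the rational number r
  set Tq : ℚ := ∑ i ∈ Ei, α i * (t i : ℚ) with hTqdef
  set r : ℚ := ((c (Fin.last n) : ℚ) - Tq) / α i₀ with hrdef
  -- ceilB equals ⌈r⌉
  have hEsplit : (Iprime n n' ∩ J) ∪ ((Iprime n n' \ J).erase i₀) = Ei := by
    ext i
    simp only [Finset.mem_union, Finset.mem_inter, Finset.mem_sdiff, Finset.mem_erase, hEdef]
    constructor
    · rintro (⟨h1, h2⟩ | ⟨h1, h2, h3⟩)
      · exact ⟨fun h => hi₀J (h ▸ h2), h1⟩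
      · exact ⟨h1, h2⟩
    · rintro ⟨h1, h2⟩
      by_cases hJ : i ∈ J
      · exact Or.inl ⟨h2, hJ⟩
      · exact Or.inr ⟨h1, h2, hJ⟩
  have hdisj : Disjoint (Iprime n n' ∩ J) ((Iprime n n' \ J).erase i₀) := by
    refine Finset.disjoint_left.mpr ?_
    intro i hi1 hi2
    exact (Finset.mem_sdiff.mp (Finset.mem_of_mem_erase hi2)).2 (Finset.mem_inter.mp hi1).2
  have hceilB : ceilB n n' α J i₀ c m = ⌈r⌉ := by
    rw [ceilB, hrdef]
    congr 1
    rw [hTqdef, ← hEsplit, Finset.sum_union hdisj]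
    have e1 : ∀ i ∈ Iprime n n' ∩ J, α i * ((c i : ℚ) + (m i : ℚ)) = α i * (t i : ℚ) := by
      intro i hi
      obtain ⟨_, hiJ⟩ := Finset.mem_inter.mp hi
      simp only [hmdef, if_pos hiJ]
      push_cast; ring
    have e2 : ∀ i ∈ (Iprime n n' \ J).erase i₀, α i * ((m i : ℚ)) = α i * (t i : ℚ) := by
      intro i hi
      have hiJ : i ∉ J := (Finset.mem_sdiff.mp (Finset.mem_of_mem_erase hi)).2
      simp only [hmdef, if_neg hiJ]
    rw [Finset.sum_congr rfl e1, Finset.sum_congr rfl e2]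
    ring
  -- r * D' is essentially an integer
  have hDα : ∀ i : Fin (n+1), ∃ e : ℤ, (α i) * (D:ℚ) = (e:ℚ) := by
    intro i
    obtain ⟨k, hk⟩ := Finset.dvd_prod_of_mem (fun j : Fin (n+1) => ((α j).den : ℤ))
      (Finset.mem_univ i)
    refine ⟨(α i).num * k, ?_⟩
    rw [hDdef, hk]
    push_cast
    rw [← mul_assoc, Rat.mul_den_eq_num]
  choose e he using hDα
  have hK : ((c (Fin.last n) : ℚ) - Tq) * (D:ℚ)
      = ((c (Fin.last n) * D - ∑ i ∈ Ei, e i * t i : ℤ) : ℚ) := by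
    push_cast
    rw [sub_mul, hTqdef, Finset.sum_mul]
    congr 1
    refine Finset.sum_congr rfl fun i _ => ?_
    rw [mul_right_comm, he i]
  set K : ℤ := c (Fin.last n) * D - ∑ i ∈ Ei, e i * t i with hKdef
  have hrD' : r * (D' : ℚ) = ((K * (α i₀).den : ℤ) : ℚ) := by
    have hq : (α i₀) * ((α i₀).den : ℚ) = (p : ℚ) := by
      rw [hpdef]; exact_mod_cast Rat.mul_den_eq_num (α i₀)
    rw [hrdef, hD'def]
    push_cast
    rw [div_mul_eq_mul_div, div_eq_iff hαi₀.ne']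
    calc ((c (Fin.last n) : ℚ) - Tq) * ((p:ℚ) * (D:ℚ))
        = (((c (Fin.last n) : ℚ) - Tq) * (D:ℚ)) * (p:ℚ) := by ring
      _ = (K:ℚ) * (p:ℚ) := by rw [hK]
      _ = (K:ℚ) * ((α i₀).den : ℚ) * α i₀ := by rw [mul_assoc, mul_comm ((α i₀).den : ℚ) (α i₀), hq]
  have hceil : (⌈r⌉:ℚ) ≤ r + 1 - 1/(D':ℚ) := ceil_le_of_den r D' hD'pos _ hrD'
  -- the main estimate
  have hylast : ⟪x, b (Fin.last n)⟫ = ∑ i ∈ Iprime n n', (α i : ℝ) * ⟪x, b i⟫ := by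
    rw [hlast, inner_sum]
    exact Finset.sum_congr rfl fun i _ => real_inner_smul_right _ _ _
  have hsplit : ∑ i ∈ Iprime n n', (α i:ℝ) * ⟪x,b i⟫
      = (α i₀:ℝ) * ⟪x,b i₀⟫ + ∑ i ∈ Ei, (α i:ℝ) * ⟪x,b i⟫ :=
    (Finset.add_sum_erase _ _ hi₀I).symm
  have hbound : ∑ i ∈ Ei, (α i:ℝ) * ⟪x,b i⟫ ≤ ∑ i ∈ Ei, (α i:ℝ) * ((t i:ℝ)+1) := by
    refine Finset.sum_le_sum fun i hi => ?_
    have h0 : (0:ℝ) ≤ (α i : ℝ) := by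
      exact_mod_cast hαnn i (Finset.mem_of_mem_erase hi)
    exact mul_le_mul_of_nonneg_left (ht_ge i) h0
  have hsumE : ∑ i ∈ Ei, (α i:ℚ) = S - α i₀ := by
    rw [hEdef, hSdef, Finset.sum_erase_eq_sub hi₀I]
  have hsumEt : ∑ i ∈ Ei, (α i:ℝ) * ((t i:ℝ)+1) = (Tq:ℝ) + ((S:ℝ) - (α i₀:ℝ)) := by
    have : ∑ i ∈ Ei, (α i:ℝ) * ((t i:ℝ)+1)
        = ∑ i ∈ Ei, (α i:ℝ) * (t i:ℝ) + ∑ i ∈ Ei, (α i:ℝ) := by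
      rw [← Finset.sum_add_distrib]
      exact Finset.sum_congr rfl fun i _ => by ring
    rw [this]
    have h1 : (Tq:ℝ) = ∑ i ∈ Ei, (α i:ℝ) * (t i:ℝ) := by
      rw [hTqdef]; push_cast; rfl
    have h2 : ((S:ℝ) - (α i₀:ℝ)) = ∑ i ∈ Ei, (α i:ℝ) := by
      rw [show (S:ℝ) - (α i₀:ℝ) = ((S - α i₀ : ℚ) : ℝ) by push_cast; ring, ← hsumE]
      push_cast; rfl
    rw [h1, h2]
  have hy0 : (α i₀:ℝ) * ⟪x, b i₀⟫ ≥ (c (Fin.last n) : ℝ) - (Tq:ℝ) + (α i₀:ℝ) - (ε:ℝ) := by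
    have h1 : (c (Fin.last n) : ℝ) + (S : ℝ) - (ε : ℝ) ≤ ⟪x, b (Fin.last n)⟫ := hx2
    rw [hylast, hsplit] at h1
    have h2 := hbound.trans_eq hsumEt
    linarith
  have hαi₀R : (0:ℝ) < (α i₀ : ℝ) := by exact_mod_cast hαi₀
  have hrR : ((r:ℚ):ℝ) * (α i₀:ℝ) = (c (Fin.last n) : ℝ) - (Tq:ℝ) := by
    rw [hrdef]
    push_cast
    field_simp
  have hεR : (ε:ℝ) * (2 * (D':ℝ)) = (α i₀:ℝ) := by
    rw [hεdef]
    push_cast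
    field_simp
  have hfin : ((⌈r⌉:ℤ):ℝ) < ⟪x, b i₀⟫ := by
    have hceilR : ((⌈r⌉:ℤ):ℝ) ≤ ((r:ℚ):ℝ) + 1 - 1/(D':ℝ) := by
      exact_mod_cast hceil
    have hD'R : (0:ℝ) < (D':ℝ) := by exact_mod_cast hD'pos
    -- y i₀ ≥ r + 1 - 1/(2 D')
    have hy1 : ((r:ℚ):ℝ) + 1 - 1/(2*(D':ℝ)) ≤ ⟪x, b i₀⟫ := by
      rw [← mul_le_mul_iff_right₀ hαi₀R]
      have hεeq : (ε:ℝ) = (α i₀:ℝ) / (2*(D':ℝ)) := by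
        rw [eq_div_iff (by linarith : (2*(D':ℝ)) ≠ 0)]
        exact hεR
      calc (α i₀:ℝ) * (((r:ℚ):ℝ) + 1 - 1/(2*(D':ℝ)))
          = ((r:ℚ):ℝ) * (α i₀:ℝ) + (α i₀:ℝ) - (α i₀:ℝ)/(2*(D':ℝ)) := by ring
        _ = (c (Fin.last n) : ℝ) - (Tq:ℝ) + (α i₀:ℝ) - (ε:ℝ) := by rw [hrR, hεeq]
        _ ≤ (α i₀:ℝ) * ⟪x, b i₀⟫ := hy0
    have : 1/(2*(D':ℝ)) < 1/(D':ℝ) := by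
      apply one_div_lt_one_div_of_lt hD'R
      linarith
    linarith
  exact ⟨m, hadm, fun i hi => by
      obtain ⟨_, hiJ⟩ := Finset.mem_inter.mp hi
      have := ht_lt i
      simp only [hmdef, if_pos hiJ]
      push_cast
      linarith,
    fun i hi => by
      have hiJ : i ∉ J := (Finset.mem_sdiff.mp (Finset.mem_of_mem_erase hi)).2
      simp only [hmdef, if_neg hiJ]
      exact ht_lt i,
    fun i hi => by
      obtain ⟨hne, hiJ'⟩ := Finset.mem_erase.mp hi
      exact hx1 i (Finset.mem_erase.mpr ⟨hne, (Finset.mem_sdiff.mp hiJ').1⟩),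
    by rw [hceilB]; exact hfin⟩
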